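/- Let H be a Hermitian operator on a finite-dimensional Hilbert space, φ a normalized state with energy mean ⟨E⟩ and root-mean-square energy width ΔE (with respect to the spectral measure of φ). Let U(t) = exp(iHt/ħ). Then for any α > 1 and any time t with 0 ≤ t < ħπ/(2αΔE), the survival amplitude satisfies |⟨φ|U(t)|φ⟩| ≥ (1 − 1/α²)·cos(αΔE t/ħ) − 1/α². -/

import Mathlib

open scoped InnerProductSpace

/-- survival-amplitude lower bound.  `U` is the time evolution
`exp(iHt/hbar)`, specified by its action on the orthonormal eigenbasis `ψ` of the
Hermitian operator `H` with eigenvalues `En`.  For `α > 1` and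
`0 ≤ t < hbarπ/(2αΔE)`, the survival amplitude satisfies
`|⟨φ|U(t)|φ⟩| ≥ (1 − 1/α²)·cos(αΔE t/hbar) − 1/α²`. -/
theorem survival_amplitude_bound
    {n : ℕ} {E : Type*} [NormedAddCommGroup E] [InnerProductSpace ℂ E]
    [FiniteDimensional ℂ E]
    (H : E →ₗ[ℂ] E) (hH : LinearMap.IsSymmetric H)
    (ψ : OrthonormalBasis (Fin n) ℂ E) (En : Fin n → ℝ)
    (heig : ∀ k, H (ψ k) = (En k : ℂ) • ψ k)
    (φ : E) (hφ : ‖φ‖ = 1)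
    (p : Fin n → ℝ) (hp : ∀ k, p k = ‖⟪ψ k, φ⟫_ℂ‖ ^ 2)
    (Emean : ℝ) (hmean : Emean = ∑ k, p k * En k)
    (ΔE : ℝ) (hΔE : 0 ≤ ΔE) (hvar : ΔE ^ 2 = ∑ k, p k * (En k - Emean) ^ 2)
    (hbar : ℝ) (hhbar : 0 < hbar)
    (t : ℝ) (ht0 : 0 ≤ t)
    (U : E →ₗ[ℂ] E)
    (hU : ∀ k, U (ψ k) = Complex.exp (Complex.I * (En k : ℂ) * (t : ℂ) / (hbar : ℂ)) • ψ k)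
    (α : ℝ) (hα : 1 < α)
    (ht : t < hbar * Real.pi / (2 * α * ΔE)) :
    (1 - 1 / α ^ 2) * Real.cos (α * ΔE * t / hbar) - 1 / α ^ 2 ≤ ‖⟪φ, U φ⟫_ℂ‖ := by
  have hα0 : (0:ℝ) < α := by linarith
  -- ΔE must be positive, otherwise `ht` contradicts `ht0`
  have hΔE' : 0 < ΔE := by
    rcases hΔE.lt_or_eq with h | h
    · exact h
    · exfalso
      rw [← h] at ht
      simp at ht
      linarith
  have hpnn : ∀ k, 0 ≤ p k := fun k => by rw [hp k]; positivity
  -- the maximal angle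
  set θ : ℝ := α * ΔE * t / hbar with hθdef
  have hθnn : 0 ≤ θ := by positivity
  have hθlt : θ < Real.pi / 2 := by
    rw [hθdef, div_lt_iff₀ hhbar]
    rw [lt_div_iff₀ (by positivity : (0:ℝ) < 2 * α * ΔE)] at ht
    nlinarith
  have h2 : ∀ k, ⟪φ, ψ k⟫_ℂ * ⟪ψ k, φ⟫_ℂ = ((p k : ℝ) : ℂ) := fun k => by
    rw [← inner_conj_symm (ψ k) φ, Complex.mul_conj, hp k, ← norm_inner_symm φ (ψ k)]
    simp [Complex.normSq_eq_norm_sq]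
  -- the survival amplitude as a sum
  have hamp : ⟪φ, U φ⟫_ℂ =
      ∑ k, (p k : ℂ) * Complex.exp (Complex.I * (En k : ℂ) * (t : ℂ) / (hbar : ℂ)) := by
    have hrep : φ = ∑ k, ⟪ψ k, φ⟫_ℂ • ψ k := (ψ.sum_repr' φ).symm
    have hUφ : U φ = ∑ k,
        (⟪ψ k, φ⟫_ℂ * Complex.exp (Complex.I * (En k : ℂ) * (t : ℂ) / (hbar : ℂ))) • ψ k := by
      conv_lhs => rw [hrep]
      rw [map_sum]
      refine Finset.sum_congr rfl fun k _ => ?_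
      rw [map_smul, hU k, smul_smul]
    rw [hUφ, inner_sum]
    refine Finset.sum_congr rfl fun k _ => ?_
    rw [inner_smul_right, mul_comm, ← mul_assoc, h2 k]
  -- probabilities sum to 1
  have hsum1 : ∑ k, p k = 1 := by
    have h := ψ.sum_inner_mul_inner φ φ
    rw [Finset.sum_congr rfl (fun k _ => h2 k)] at h
    have h3 : ⟪φ, φ⟫_ℂ = (1 : ℂ) := by
      rw [inner_self_eq_norm_sq_to_K, hφ]; norm_num
    rw [h3, ← Complex.ofReal_sum] at h
    exact_mod_cast h
  -- phase-rotated real part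
  have hRe : (∑ k, p k * Real.cos ((En k - Emean) * t / hbar)) ≤ ‖⟪φ, U φ⟫_ℂ‖ := by
    set u : ℂ := Complex.exp ((Emean * t / hbar : ℝ) * Complex.I) with hu
    have hnu : ‖(starRingEnd ℂ) u‖ = 1 := by
      rw [RCLike.norm_conj, hu, Complex.norm_exp_ofReal_mul_I]
    have key : ((starRingEnd ℂ) u * ⟪φ, U φ⟫_ℂ).re
        = ∑ k, p k * Real.cos ((En k - Emean) * t / hbar) := by
      rw [hamp, Finset.mul_sum, Complex.re_sum]
      refine Finset.sum_congr rfl fun k _ => ?_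
      have hcu : (starRingEnd ℂ) u = Complex.exp (-((Emean * t / hbar : ℝ) * Complex.I)) := by
        rw [hu, ← Complex.exp_conj]
        congr 1
        simp [Complex.conj_I]
      have hmul : (starRingEnd ℂ) u * ((p k : ℂ) * Complex.exp (Complex.I * (En k : ℂ) * (t : ℂ) / (hbar : ℂ)))
          = (p k : ℂ) * Complex.exp (((En k - Emean) * t / hbar : ℝ) * Complex.I) := by
        rw [hcu, mul_comm, mul_assoc, ← Complex.exp_add]
        congr 2
        push_cast
        ring
      rw [hmul, Complex.re_ofReal_mul, Complex.exp_ofReal_mul_I_re]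
    calc (∑ k, p k * Real.cos ((En k - Emean) * t / hbar))
        = ((starRingEnd ℂ) u * ⟪φ, U φ⟫_ℂ).re := key.symm
      _ ≤ ‖(starRingEnd ℂ) u * ⟪φ, U φ⟫_ℂ‖ := Complex.re_le_norm _
      _ = ‖⟪φ, U φ⟫_ℂ‖ := by rw [norm_mul, hnu, one_mul]
  -- split the sum
  refine le_trans ?_ hRe
  set S : Finset (Fin n) := Finset.univ.filter (fun k => |En k - Emean| ≤ α * ΔE) with hS
  have hsplit : (∑ k, p k * Real.cos ((En k - Emean) * t / hbar))
      = (∑ k ∈ S, p k * Real.cos ((En k - Emean) * t / hbar))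
      + ∑ k ∈ Finset.univ.filter (fun k => ¬ |En k - Emean| ≤ α * ΔE),
          p k * Real.cos ((En k - Emean) * t / hbar) :=
    (Finset.sum_filter_add_sum_filter_not _ _ _).symm
  have hq := Finset.sum_filter_add_sum_filter_not Finset.univ
      (fun k => |En k - Emean| ≤ α * ΔE) p
  rw [hsum1] at hq
  set q : ℝ := ∑ k ∈ Finset.univ.filter (fun k => ¬ |En k - Emean| ≤ α * ΔE), p k with hqdef
  have hqnn : 0 ≤ q := Finset.sum_nonneg fun k _ => hpnn k
  -- Chebyshev bound : q ≤ 1/α²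
  have hcheb : q ≤ 1 / α ^ 2 := by
    have h1 : q * (α * ΔE) ^ 2 ≤ ΔE ^ 2 := by
      rw [hvar, hqdef, Finset.sum_mul]
      refine Finset.sum_le_sum_of_subset_of_nonneg
        (Finset.filter_subset (fun k => ¬ |En k - Emean| ≤ α * ΔE) Finset.univ)
        (fun k _ _ => mul_nonneg (hpnn k) (sq_nonneg _)) |>.trans' ?_
      refine Finset.sum_le_sum fun k hk => ?_
      have hk' : α * ΔE < |En k - Emean| := by
        simpa using lt_of_not_ge (Finset.mem_filter.mp hk).2
      have : (α * ΔE) ^ 2 ≤ (En k - Emean) ^ 2 := by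
        rw [← sq_abs (En k - Emean)]
        exact pow_le_pow_left₀ (by positivity) hk'.le 2
      exact mul_le_mul_of_nonneg_left this (hpnn k) |>.trans_eq' (by ring)
    rw [le_div_iff₀ (by positivity : (0:ℝ) < α ^ 2)]
    nlinarith [h1, mul_pos hΔE' hΔE']
  -- cos bounds
  have hcosnn : 0 ≤ Real.cos θ :=
    Real.cos_nonneg_of_mem_Icc ⟨by linarith [Real.pi_pos], hθlt.le⟩
  have hcosle1 : Real.cos θ ≤ 1 := Real.cos_le_one θ
  have hbound1 : ∀ k ∈ S, Real.cos θ ≤ Real.cos ((En k - Emean) * t / hbar) := by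
    intro k hk
    have hk' : |En k - Emean| ≤ α * ΔE := by simpa using (Finset.mem_filter.mp hk).2
    rw [← Real.cos_abs ((En k - Emean) * t / hbar)]
    refine Real.cos_le_cos_of_nonneg_of_le_pi (abs_nonneg _)
      (by linarith [Real.pi_pos, hθlt]) ?_
    rw [abs_div, abs_mul, abs_of_nonneg ht0, abs_of_pos hhbar, hθdef]
    gcongr
  have hlow : (1 - q) * Real.cos θ - q
      ≤ ∑ k, p k * Real.cos ((En k - Emean) * t / hbar) := by
    rw [hsplit]
    have h1 : (1 - q) * Real.cos θ ≤ ∑ k ∈ S, p k * Real.cos ((En k - Emean) * t / hbar) := by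
      have : (1 - q) = ∑ k ∈ S, p k := by rw [hS]; linarith
      rw [this, Finset.sum_mul]
      exact Finset.sum_le_sum fun k hk =>
        mul_le_mul_of_nonneg_left (hbound1 k hk) (hpnn k)
    have h2 : -q ≤ ∑ k ∈ Finset.univ.filter (fun k => ¬ |En k - Emean| ≤ α * ΔE),
        p k * Real.cos ((En k - Emean) * t / hbar) := by
      rw [hqdef, ← Finset.sum_neg_distrib]
      exact Finset.sum_le_sum fun k _ => by
        nlinarith [Real.neg_one_le_cos ((En k - Emean) * t / hbar), hpnn k]
    linarith
  refine le_trans ?_ hlow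
  nlinarith
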